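/- arXiv:1304.3913 — 4 statements merged into one kernel-verified Lean document; each statement's English description precedes it below -/
import Mathlib

section
/- For every x ∈ Mat_ℓ(ℂ), every r ≥ 1, every y_1,…,y_r ∈ Mat_ℓ(ℂ), and all 1 ≤ i,j,h,k ≤ m+n, the following identity holds in U: t_{ij}(x)·t_{hk}(y_1⊗⋯⊗y_r) − (−1)^{(p(i)+p(j))(p(h)+p(k))}·t_{hk}(y_1⊗⋯⊗y_r)·t_{ij}(x) = (−1)^{p(i)p(j)+p(i)p(h)+p(j)p(h)} Σ_{s=1}^{r} [ t_{hj}(y_1⊗⋯⊗y_{s−1})·t_{ik}((x·y_s)⊗y_{s+1}⊗⋯⊗y_r) − t_{hj}(y_1⊗⋯⊗y_{s−1}⊗(y_s·x))·t_{ik}(y_{s+1}⊗⋯⊗y_r) ], where x·y_s and y_s·x are matrix products in Mat_ℓ(ℂ). -/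
open scoped BigOperators Classical

noncomputable section

abbrev Box (m n ℓ : ℕ) := Fin (m + n) × Fin ℓ

/-- The sign `(-1)^ε` for `ε ∈ ℤ/2ℤ`. -/
def sgn (ε : ZMod 2) : ℂ := if ε = 0 then 1 else -1

/-- The defining super-commutation relations of `U(gl_{mℓ|nℓ})` on the free
algebra generated by the symbols `E_{a,b}`, `a, b ∈ J`. -/
inductive SRel (m n ℓ : ℕ) (p : Fin (m + n) → ZMod 2) :
    FreeAlgebra ℂ (Box m n ℓ × Box m n ℓ) →
    FreeAlgebra ℂ (Box m n ℓ × Box m n ℓ) → Prop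
  | super (a b c d : Box m n ℓ) :
      SRel m n ℓ p (FreeAlgebra.ι ℂ (a, b) * FreeAlgebra.ι ℂ (c, d))
        (sgn ((p a.1 + p b.1) * (p c.1 + p d.1)) •
            (FreeAlgebra.ι ℂ (c, d) * FreeAlgebra.ι ℂ (a, b)) +
          (if b = c then FreeAlgebra.ι ℂ (a, d) else 0) -
          sgn ((p a.1 + p b.1) * (p c.1 + p d.1)) •
            (if a = d then FreeAlgebra.ι ℂ (c, b) else 0))

/-- The universal enveloping superalgebra `U = U(gl_{mℓ|nℓ})`. -/
abbrev U (m n ℓ : ℕ) (p : Fin (m + n) → ZMod 2) := RingQuot (SRel m n ℓ p)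

/-- The generator `E_{a,b}` of `U`. -/
def gen (m n ℓ : ℕ) (p : Fin (m + n) → ZMod 2) (a b : Box m n ℓ) : U m n ℓ p :=
  RingQuot.mkAlgHom ℂ (SRel m n ℓ p) (FreeAlgebra.ι ℂ (a, b))


-- sgn lemmas
lemma sgn_add (a b : ZMod 2) : sgn (a + b) = sgn a * sgn b := by
  have ha : a = 0 ∨ a = 1 := by revert a; decide
  have hb : b = 0 ∨ b = 1 := by revert b; decide
  have h11 : (1 : ZMod 2) + 1 = 0 := by decide
  have h10 : (1 : ZMod 2) ≠ 0 := by decide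
  rcases ha with h | h <;> rcases hb with h' | h' <;> subst h <;> subst h'
  · simp [sgn]
  · simp [sgn, h10]
  · simp [sgn, h10]
  · rw [h11]; norm_num [sgn, h10]

lemma sgn_mul_sgn (a : ZMod 2) : sgn a * sgn a = 1 := by
  have ha : a = 0 ∨ a = 1 := by revert a; decide
  rcases ha with h | h <;> subst h <;> norm_num [sgn]

lemma gen_rel (m n ℓ : ℕ) (p : Fin (m + n) → ZMod 2) (a b c d : Box m n ℓ) :
    gen m n ℓ p a b * gen m n ℓ p c d =
      sgn ((p a.1 + p b.1) * (p c.1 + p d.1)) • (gen m n ℓ p c d * gen m n ℓ p a b) +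
        (if b = c then gen m n ℓ p a d else 0) -
        sgn ((p a.1 + p b.1) * (p c.1 + p d.1)) •
          (if a = d then gen m n ℓ p c b else 0) := by
  have h := RingQuot.mkAlgHom_rel ℂ (SRel.super (p := p) a b c d)
  simpa [gen, map_mul, map_add, map_sub, map_smul, apply_ite
    (RingQuot.mkAlgHom ℂ (SRel m n ℓ p))] using h


/-- The matrix of maps `t_{ij}` on `Mat_ℓ(ℂ)`:
`t_{ij}(x) = (-1)^{p(i)} Σ_{a,b} x_{a,b} E_{i⋆a,j⋆b}` (linear extension to
`Mat_ℓ(ℂ)` of `t_{ij}(e_{a,b}) = (-1)^{p(i)} E_{i⋆a,j⋆b}`). -/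
def tMat (m n ℓ : ℕ) (p : Fin (m + n) → ZMod 2) :
    Matrix (Fin ℓ) (Fin ℓ) ℂ →ₗ[ℂ]
      Matrix (Fin (m + n)) (Fin (m + n)) (U m n ℓ p) where
  toFun x := Matrix.of fun i j =>
    sgn (p i) • ∑ a : Fin ℓ, ∑ b : Fin ℓ, x a b • gen m n ℓ p (i, a) (j, b)
  map_add' x y := by
    ext i j
    simp [Matrix.add_apply, add_smul, Finset.sum_add_distrib, smul_add]
  map_smul' c x := by
    ext i j
    simp only [Matrix.smul_apply, smul_eq_mul, mul_smul, ← Finset.smul_sum,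
      Matrix.of_apply, RingHom.id_apply]
    rw [smul_comm]

/-- The algebra homomorphism `Φ : T(Mat_ℓ(ℂ)) → Mat_{m+n}(U)` extending the
maps `t_{ij}`; by definition of `t_{ij}` on tensors,
`t_{ij}(x_1 ⊗ ⋯ ⊗ x_r) = (Φ(x_1 ⊗ ⋯ ⊗ x_r))_{ij}`. -/
def Phi (m n ℓ : ℕ) (p : Fin (m + n) → ZMod 2) :
    TensorAlgebra ℂ (Matrix (Fin ℓ) (Fin ℓ) ℂ) →ₐ[ℂ]
      Matrix (Fin (m + n)) (Fin (m + n)) (U m n ℓ p) :=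
  TensorAlgebra.lift ℂ (tMat m n ℓ p)

/-- The pure tensor `x_1 ⊗ ⋯ ⊗ x_r` in the tensor algebra, given as a list. -/
def TT (ℓ : ℕ) (xs : List (Matrix (Fin ℓ) (Fin ℓ) ℂ)) :
    TensorAlgebra ℂ (Matrix (Fin ℓ) (Fin ℓ) ℂ) :=
  (xs.map fun y => TensorAlgebra.ι ℂ y).prod

lemma tMat_apply (m n ℓ : ℕ) (p : Fin (m + n) → ZMod 2)
    (x : Matrix (Fin ℓ) (Fin ℓ) ℂ) (i j : Fin (m + n)) :
    tMat m n ℓ p x i j =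
      sgn (p i) • ∑ a : Fin ℓ, ∑ b : Fin ℓ, x a b • gen m n ℓ p (i, a) (j, b) := rfl

lemma sum3_swap {M β γ δ : Type*} [AddCommMonoid M] [Fintype β] [Fintype γ]
    [Fintype δ] (g : β → γ → δ → M) :
    (∑ b, ∑ c, ∑ d, g b c d) = ∑ c, ∑ d, ∑ b, g b c d := by
  rw [Finset.sum_comm]
  exact Finset.sum_congr rfl fun _ _ => Finset.sum_comm

lemma sum4_swap {M α β γ δ : Type*} [AddCommMonoid M] [Fintype α] [Fintype β]
    [Fintype γ] [Fintype δ] (f : α → β → γ → δ → M) :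
    (∑ a, ∑ b, ∑ c, ∑ d, f a b c d) = ∑ c, ∑ d, ∑ a, ∑ b, f a b c d := by
  calc (∑ a, ∑ b, ∑ c, ∑ d, f a b c d)
      = ∑ a, ∑ c, ∑ d, ∑ b, f a b c d :=
        Finset.sum_congr rfl fun a _ => sum3_swap _
    _ = ∑ c, ∑ a, ∑ d, ∑ b, f a b c d := Finset.sum_comm
    _ = ∑ c, ∑ d, ∑ a, ∑ b, f a b c d :=
        Finset.sum_congr rfl fun c _ => Finset.sum_comm

lemma mul_expand {m n ℓ : ℕ} {p : Fin (m + n) → ZMod 2}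
    (A B : Fin ℓ → Fin ℓ → ℂ) (F G : Fin ℓ → Fin ℓ → U m n ℓ p) (s t : ℂ) :
    (s • ∑ a, ∑ b, A a b • F a b) * (t • ∑ c, ∑ d, B c d • G c d) =
      ∑ a, ∑ b, ∑ c, ∑ d, (s * t * (A a b * B c d)) • (F a b * G c d) := by
  have hXY : (∑ a, ∑ b, A a b • F a b) * (∑ c, ∑ d, B c d • G c d)
      = ∑ a, ∑ b, ∑ c, ∑ d, (A a b * B c d) • (F a b * G c d) := by
    rw [Finset.sum_mul]
    refine Finset.sum_congr rfl fun a _ => ?_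
    rw [Finset.sum_mul]
    refine Finset.sum_congr rfl fun b _ => ?_
    rw [smul_mul_assoc, Finset.mul_sum, Finset.smul_sum]
    refine Finset.sum_congr rfl fun c _ => ?_
    rw [Finset.mul_sum, Finset.smul_sum]
    refine Finset.sum_congr rfl fun d _ => ?_
    rw [mul_smul_comm, smul_smul]
  calc (s • ∑ a, ∑ b, A a b • F a b) * (t • ∑ c, ∑ d, B c d • G c d)
      = (s * t) • ((∑ a, ∑ b, A a b • F a b) * (∑ c, ∑ d, B c d • G c d)) := by
        rw [smul_mul_assoc, mul_smul_comm, smul_smul]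
    _ = _ := by
        rw [hXY]
        simp only [Finset.smul_sum, smul_smul]


lemma sgn_congr {e₁ e₂ : ZMod 2} (h : e₁ = e₂) : sgn e₁ = sgn e₂ := by rw [h]

lemma gen_rel' (m n ℓ : ℕ) (p : Fin (m + n) → ZMod 2) (i j h k : Fin (m + n))
    (a b c d : Fin ℓ) :
    gen m n ℓ p (i, a) (j, b) * gen m n ℓ p (h, c) (k, d) =
      sgn ((p i + p j) * (p h + p k)) •
          (gen m n ℓ p (h, c) (k, d) * gen m n ℓ p (i, a) (j, b)) +
        (if ((j, b) : Box m n ℓ) = (h, c) then gen m n ℓ p (i, a) (k, d) else 0) -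
        sgn ((p i + p j) * (p h + p k)) •
          (if ((i, a) : Box m n ℓ) = (k, d) then gen m n ℓ p (h, c) (j, b) else 0) :=
  gen_rel m n ℓ p (i, a) (j, b) (h, c) (k, d)

lemma tM_rel (m n ℓ : ℕ) (p : Fin (m + n) → ZMod 2)
    (x y : Matrix (Fin ℓ) (Fin ℓ) ℂ) (i j h k : Fin (m + n)) :
    tMat m n ℓ p x i j * tMat m n ℓ p y h k =
      sgn ((p i + p j) * (p h + p k)) • (tMat m n ℓ p y h k * tMat m n ℓ p x i j) +
        sgn (p i * p j + p i * p h + p j * p h) •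
          ((if j = h then tMat m n ℓ p (x * y) i k else 0) -
            (if i = k then tMat m n ℓ p (y * x) h j else 0)) := by
  have hS1 :
      (∑ a : Fin ℓ, ∑ b : Fin ℓ, ∑ c : Fin ℓ, ∑ d : Fin ℓ,
          ((sgn (p i) * sgn (p h) * (x a b * y c d)) * sgn ((p i + p j) * (p h + p k))) •
            (gen m n ℓ p (h, c) (k, d) * gen m n ℓ p (i, a) (j, b))) =
        sgn ((p i + p j) * (p h + p k)) • (tMat m n ℓ p y h k * tMat m n ℓ p x i j) := by
    conv_lhs => rw [sum4_swap]
    rw [tMat_apply m n ℓ p y, tMat_apply m n ℓ p x, mul_expand y x]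
    simp only [Finset.smul_sum, smul_smul]
    refine Finset.sum_congr rfl fun c _ => Finset.sum_congr rfl fun d _ =>
      Finset.sum_congr rfl fun a _ => Finset.sum_congr rfl fun b _ => ?_
    congr 1
    ring
  have hS2 :
      (∑ a : Fin ℓ, ∑ b : Fin ℓ, ∑ c : Fin ℓ, ∑ d : Fin ℓ,
          (sgn (p i) * sgn (p h) * (x a b * y c d)) •
            (if ((j, b) : Box m n ℓ) = (h, c) then gen m n ℓ p (i, a) (k, d) else 0)) =
        sgn (p i * p j + p i * p h + p j * p h) •
          (if j = h then tMat m n ℓ p (x * y) i k else 0) := by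
    by_cases hjh : j = h
    · subst hjh
      rw [if_pos rfl]
      have hz : ∀ a b : ZMod 2, a * b + a * b + b * b = b := by decide
      calc (∑ a : Fin ℓ, ∑ b : Fin ℓ, ∑ c : Fin ℓ, ∑ d : Fin ℓ,
              (sgn (p i) * sgn (p j) * (x a b * y c d)) •
                (if ((j, b) : Box m n ℓ) = (j, c) then gen m n ℓ p (i, a) (k, d) else 0))
          = ∑ a : Fin ℓ, ∑ b : Fin ℓ, ∑ d : Fin ℓ,
              (sgn (p i) * sgn (p j) * (x a b * y b d)) • gen m n ℓ p (i, a) (k, d) := by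
            refine Finset.sum_congr rfl fun a _ => Finset.sum_congr rfl fun b _ => ?_
            rw [Finset.sum_comm]
            refine Finset.sum_congr rfl fun d _ => ?_
            simp [Prod.mk.injEq, smul_ite, Finset.sum_ite_eq]
        _ = ∑ a : Fin ℓ, ∑ d : Fin ℓ,
              (sgn (p i) * sgn (p j) * (x * y) a d) • gen m n ℓ p (i, a) (k, d) := by
            refine Finset.sum_congr rfl fun a _ => ?_
            rw [Finset.sum_comm]
            refine Finset.sum_congr rfl fun d _ => ?_
            rw [← Finset.sum_smul]
            congr 1
            rw [Matrix.mul_apply, Finset.mul_sum]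
        _ = _ := by
            rw [tMat_apply]
            simp only [Finset.smul_sum, smul_smul]
            refine Finset.sum_congr rfl fun a _ => Finset.sum_congr rfl fun d _ => ?_
            congr 1
            rw [hz (p i) (p j)]
            ring
    · simp [Prod.mk.injEq, hjh]
  have hS3 :
      (∑ a : Fin ℓ, ∑ b : Fin ℓ, ∑ c : Fin ℓ, ∑ d : Fin ℓ,
          ((sgn (p i) * sgn (p h) * (x a b * y c d)) * sgn ((p i + p j) * (p h + p k))) •
            (if ((i, a) : Box m n ℓ) = (k, d) then gen m n ℓ p (h, c) (j, b) else 0)) =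
        sgn (p i * p j + p i * p h + p j * p h) •
          (if i = k then tMat m n ℓ p (y * x) h j else 0) := by
    by_cases hik : i = k
    · subst hik
      rw [if_pos rfl]
      have key3 : ∀ a b c : ZMod 2,
          a * b + a * c + b * c + c = a + c + (a + b) * (c + a) := by decide
      calc (∑ a : Fin ℓ, ∑ b : Fin ℓ, ∑ c : Fin ℓ, ∑ d : Fin ℓ,
              ((sgn (p i) * sgn (p h) * (x a b * y c d)) * sgn ((p i + p j) * (p h + p i))) •
                (if ((i, a) : Box m n ℓ) = (i, d) then gen m n ℓ p (h, c) (j, b) else 0))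
          = ∑ a : Fin ℓ, ∑ b : Fin ℓ, ∑ c : Fin ℓ,
              ((sgn (p i) * sgn (p h) * (x a b * y c a)) * sgn ((p i + p j) * (p h + p i))) •
                gen m n ℓ p (h, c) (j, b) := by
            refine Finset.sum_congr rfl fun a _ => Finset.sum_congr rfl fun b _ =>
              Finset.sum_congr rfl fun c _ => ?_
            simp [Prod.mk.injEq, smul_ite, Finset.sum_ite_eq]
        _ = ∑ b : Fin ℓ, ∑ c : Fin ℓ, ∑ a : Fin ℓ,
              ((sgn (p i) * sgn (p h) * (x a b * y c a)) * sgn ((p i + p j) * (p h + p i))) •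
                gen m n ℓ p (h, c) (j, b) := sum3_swap _
        _ = ∑ c : Fin ℓ, ∑ b : Fin ℓ,
              ((sgn (p i) * sgn (p h) * (y * x) c b) * sgn ((p i + p j) * (p h + p i))) •
                gen m n ℓ p (h, c) (j, b) := by
            rw [Finset.sum_comm]
            refine Finset.sum_congr rfl fun c _ => Finset.sum_congr rfl fun b _ => ?_
            rw [← Finset.sum_smul]
            congr 1
            rw [Matrix.mul_apply, Finset.mul_sum, Finset.sum_mul]
            exact Finset.sum_congr rfl fun a _ => by ring
        _ = _ := by
            rw [tMat_apply]
            simp only [Finset.smul_sum, smul_smul]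
            refine Finset.sum_congr rfl fun c _ => Finset.sum_congr rfl fun b _ => ?_
            congr 1
            have hsgn : sgn (p i * p j + p i * p h + p j * p h) * sgn (p h) =
                (sgn (p i) * sgn (p h)) * sgn ((p i + p j) * (p h + p i)) := by
              rw [← sgn_add, ← sgn_add, ← sgn_add]
              exact sgn_congr (key3 (p i) (p j) (p h))
            calc sgn (p i) * sgn (p h) * (y * x) c b * sgn ((p i + p j) * (p h + p i))
                = ((sgn (p i) * sgn (p h)) * sgn ((p i + p j) * (p h + p i))) * (y * x) c b := by
                  ring
              _ = (sgn (p i * p j + p i * p h + p j * p h) * sgn (p h)) * (y * x) c b := by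
                  rw [hsgn]
              _ = sgn (p i * p j + p i * p h + p j * p h) * (sgn (p h) * (y * x) c b) := by
                  ring
    · simp [Prod.mk.injEq, hik]
  calc tMat m n ℓ p x i j * tMat m n ℓ p y h k
      = ∑ a : Fin ℓ, ∑ b : Fin ℓ, ∑ c : Fin ℓ, ∑ d : Fin ℓ,
          (sgn (p i) * sgn (p h) * (x a b * y c d)) •
            (gen m n ℓ p (i, a) (j, b) * gen m n ℓ p (h, c) (k, d)) := by
        rw [tMat_apply m n ℓ p x, tMat_apply m n ℓ p y, mul_expand x y]
    _ = ∑ a : Fin ℓ, ∑ b : Fin ℓ, ∑ c : Fin ℓ, ∑ d : Fin ℓ,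
          (((sgn (p i) * sgn (p h) * (x a b * y c d)) * sgn ((p i + p j) * (p h + p k))) •
              (gen m n ℓ p (h, c) (k, d) * gen m n ℓ p (i, a) (j, b)) +
            (sgn (p i) * sgn (p h) * (x a b * y c d)) •
              (if ((j, b) : Box m n ℓ) = (h, c) then gen m n ℓ p (i, a) (k, d) else 0) -
            ((sgn (p i) * sgn (p h) * (x a b * y c d)) * sgn ((p i + p j) * (p h + p k))) •
              (if ((i, a) : Box m n ℓ) = (k, d) then gen m n ℓ p (h, c) (j, b) else 0)) := by
        refine Finset.sum_congr rfl fun a _ => Finset.sum_congr rfl fun b _ =>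
          Finset.sum_congr rfl fun c _ => Finset.sum_congr rfl fun d _ => ?_
        rw [gen_rel' m n ℓ p i j h k a b c d, smul_sub, smul_add, smul_smul, smul_smul]
    _ = sgn ((p i + p j) * (p h + p k)) • (tMat m n ℓ p y h k * tMat m n ℓ p x i j) +
          sgn (p i * p j + p i * p h + p j * p h) •
            (if j = h then tMat m n ℓ p (x * y) i k else 0) -
          sgn (p i * p j + p i * p h + p j * p h) •
            (if i = k then tMat m n ℓ p (y * x) h j else 0) := by
        simp only [Finset.sum_add_distrib, Finset.sum_sub_distrib]
        rw [hS1, hS2, hS3]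
    _ = _ := by rw [smul_sub]; abel

lemma Phi_ι (m n ℓ : ℕ) (p : Fin (m + n) → ZMod 2) (y : Matrix (Fin ℓ) (Fin ℓ) ℂ) :
    Phi m n ℓ p (TensorAlgebra.ι ℂ y) = tMat m n ℓ p y := by
  simp [Phi, TensorAlgebra.lift_ι_apply]

lemma Phi_nil (m n ℓ : ℕ) (p : Fin (m + n) → ZMod 2) :
    Phi m n ℓ p (TT ℓ []) = 1 := by
  simp [TT]

lemma Phi_cons (m n ℓ : ℕ) (p : Fin (m + n) → ZMod 2)
    (y : Matrix (Fin ℓ) (Fin ℓ) ℂ) (t : List (Matrix (Fin ℓ) (Fin ℓ) ℂ)) :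
    Phi m n ℓ p (TT ℓ (y :: t)) = tMat m n ℓ p y * Phi m n ℓ p (TT ℓ t) := by
  rw [TT, List.map_cons, List.prod_cons, map_mul, Phi_ι]
  rfl

lemma Phi_single (m n ℓ : ℕ) (p : Fin (m + n) → ZMod 2)
    (y : Matrix (Fin ℓ) (Fin ℓ) ℂ) :
    Phi m n ℓ p (TT ℓ [y]) = tMat m n ℓ p y := by
  rw [Phi_cons, Phi_nil, mul_one]

lemma Phi_cons_apply (m n ℓ : ℕ) (p : Fin (m + n) → ZMod 2)
    (y : Matrix (Fin ℓ) (Fin ℓ) ℂ) (t : List (Matrix (Fin ℓ) (Fin ℓ) ℂ))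
    (h k : Fin (m + n)) :
    Phi m n ℓ p (TT ℓ (y :: t)) h k =
      ∑ u : Fin (m + n), tMat m n ℓ p y h u * Phi m n ℓ p (TT ℓ t) u k := by
  rw [Phi_cons]
  rfl

lemma zmod1 : ∀ A c u k : ZMod 2, A * (c + u) + A * (u + k) = A * (c + k) := by decide
lemma zmod2 : ∀ a b c u : ZMod 2,
    (a + b) * (c + u) + (a * b + a * u + b * u) = a * b + a * c + b * c := by decide
lemma zmod3 : ∀ a : ZMod 2, a + a = 0 := by decide

lemma sgn_zero : sgn 0 = 1 := by simp [sgn]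


lemma key (m n ℓ : ℕ) (p : Fin (m + n) → ZMod 2) (x : Matrix (Fin ℓ) (Fin ℓ) ℂ)
    (i j : Fin (m + n)) :
    ∀ (ys : List (Matrix (Fin ℓ) (Fin ℓ) ℂ)) (h k : Fin (m + n)),
    tMat m n ℓ p x i j * Phi m n ℓ p (TT ℓ ys) h k =
      sgn ((p i + p j) * (p h + p k)) •
          (Phi m n ℓ p (TT ℓ ys) h k * tMat m n ℓ p x i j) +
        sgn (p i * p j + p i * p h + p j * p h) •
          ∑ s : Fin ys.length,
            (Phi m n ℓ p (TT ℓ (ys.take (s : ℕ))) h j *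
                Phi m n ℓ p (TT ℓ ((x * ys.get s) :: ys.drop ((s : ℕ) + 1))) i k -
              Phi m n ℓ p (TT ℓ (ys.take (s : ℕ) ++ [ys.get s * x])) h j *
                Phi m n ℓ p (TT ℓ (ys.drop ((s : ℕ) + 1))) i k) := by
  intro ys
  induction ys with
  | nil =>
      intro h k
      rw [Phi_nil]
      by_cases hk : h = k
      · subst hk
        rw [Matrix.one_apply_eq, zmod3 (p h), mul_zero, sgn_zero, one_smul,
          one_mul, mul_one]
        simp
      · rw [Matrix.one_apply_ne hk, mul_zero, zero_mul, smul_zero, zero_add]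
        simp
  | cons y t IH =>
      intro h k
      have hσσ : ∀ u : Fin (m + n),
          sgn ((p i + p j) * (p h + p u)) * sgn ((p i + p j) * (p u + p k)) =
            sgn ((p i + p j) * (p h + p k)) := fun u => by
        rw [← sgn_add]; exact sgn_congr (zmod1 (p i + p j) (p h) (p u) (p k))
      have hστ : ∀ u : Fin (m + n),
          sgn ((p i + p j) * (p h + p u)) * sgn (p i * p j + p i * p u + p j * p u) =
            sgn (p i * p j + p i * p h + p j * p h) := fun u => by
        rw [← sgn_add]; exact sgn_congr (zmod2 (p i) (p j) (p h) (p u))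
      -- abbreviation for the inner sum of the induction hypothesis
      set S : Fin (m + n) → Matrix (Fin (m + n)) (Fin (m + n)) (U m n ℓ p) →
          U m n ℓ p := fun u M => 0 with hS0
      clear hS0 S
      have hu : ∀ u : Fin (m + n),
          tMat m n ℓ p x i j * (tMat m n ℓ p y h u * Phi m n ℓ p (TT ℓ t) u k) =
            sgn ((p i + p j) * (p h + p k)) •
                (tMat m n ℓ p y h u * (Phi m n ℓ p (TT ℓ t) u k * tMat m n ℓ p x i j)) +
              sgn (p i * p j + p i * p h + p j * p h) •
                (tMat m n ℓ p y h u *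
                  ∑ s : Fin t.length,
                    (Phi m n ℓ p (TT ℓ (t.take (s : ℕ))) u j *
                        Phi m n ℓ p (TT ℓ ((x * t.get s) :: t.drop ((s : ℕ) + 1))) i k -
                      Phi m n ℓ p (TT ℓ (t.take (s : ℕ) ++ [t.get s * x])) u j *
                        Phi m n ℓ p (TT ℓ (t.drop ((s : ℕ) + 1))) i k)) +
              sgn (p i * p j + p i * p h + p j * p h) •
                (((if j = h then tMat m n ℓ p (x * y) i u else 0) -
                    (if i = u then tMat m n ℓ p (y * x) h j else 0)) *
                  Phi m n ℓ p (TT ℓ t) u k) := by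
        intro u
        calc tMat m n ℓ p x i j * (tMat m n ℓ p y h u * Phi m n ℓ p (TT ℓ t) u k)
            = (tMat m n ℓ p x i j * tMat m n ℓ p y h u) * Phi m n ℓ p (TT ℓ t) u k :=
              (mul_assoc _ _ _).symm
          _ = (sgn ((p i + p j) * (p h + p u)) • (tMat m n ℓ p y h u * tMat m n ℓ p x i j) +
                sgn (p i * p j + p i * p h + p j * p h) •
                  ((if j = h then tMat m n ℓ p (x * y) i u else 0) -
                    (if i = u then tMat m n ℓ p (y * x) h j else 0))) *
                Phi m n ℓ p (TT ℓ t) u k := by rw [tM_rel]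
          _ = sgn ((p i + p j) * (p h + p u)) •
                ((tMat m n ℓ p y h u * tMat m n ℓ p x i j) * Phi m n ℓ p (TT ℓ t) u k) +
                sgn (p i * p j + p i * p h + p j * p h) •
                  (((if j = h then tMat m n ℓ p (x * y) i u else 0) -
                      (if i = u then tMat m n ℓ p (y * x) h j else 0)) *
                    Phi m n ℓ p (TT ℓ t) u k) := by
              rw [add_mul, smul_mul_assoc, smul_mul_assoc]
          _ = sgn ((p i + p j) * (p h + p u)) •
                (tMat m n ℓ p y h u * (tMat m n ℓ p x i j * Phi m n ℓ p (TT ℓ t) u k)) +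
                sgn (p i * p j + p i * p h + p j * p h) •
                  (((if j = h then tMat m n ℓ p (x * y) i u else 0) -
                      (if i = u then tMat m n ℓ p (y * x) h j else 0)) *
                    Phi m n ℓ p (TT ℓ t) u k) := by rw [mul_assoc]
          _ = _ := by
              rw [IH u k, mul_add (tMat m n ℓ p y h u), mul_smul_comm, mul_smul_comm,
                smul_add, smul_smul, smul_smul, hσσ u, hστ u]
      calc tMat m n ℓ p x i j * Phi m n ℓ p (TT ℓ (y :: t)) h k
          = ∑ u : Fin (m + n),
              tMat m n ℓ p x i j * (tMat m n ℓ p y h u * Phi m n ℓ p (TT ℓ t) u k) := by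
            rw [Phi_cons_apply, Finset.mul_sum]
        _ = (∑ u : Fin (m + n), sgn ((p i + p j) * (p h + p k)) •
                (tMat m n ℓ p y h u * (Phi m n ℓ p (TT ℓ t) u k * tMat m n ℓ p x i j))) +
              (∑ u : Fin (m + n), sgn (p i * p j + p i * p h + p j * p h) •
                (tMat m n ℓ p y h u *
                  ∑ s : Fin t.length,
                    (Phi m n ℓ p (TT ℓ (t.take (s : ℕ))) u j *
                        Phi m n ℓ p (TT ℓ ((x * t.get s) :: t.drop ((s : ℕ) + 1))) i k -
                      Phi m n ℓ p (TT ℓ (t.take (s : ℕ) ++ [t.get s * x])) u j *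
                        Phi m n ℓ p (TT ℓ (t.drop ((s : ℕ) + 1))) i k))) +
              (∑ u : Fin (m + n), sgn (p i * p j + p i * p h + p j * p h) •
                (((if j = h then tMat m n ℓ p (x * y) i u else 0) -
                    (if i = u then tMat m n ℓ p (y * x) h j else 0)) *
                  Phi m n ℓ p (TT ℓ t) u k)) := by
            rw [← Finset.sum_add_distrib, ← Finset.sum_add_distrib]
            exact Finset.sum_congr rfl fun u _ => hu u
        _ = _ := by
            have hA : (∑ u : Fin (m + n), sgn ((p i + p j) * (p h + p k)) •
                  (tMat m n ℓ p y h u *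
                    (Phi m n ℓ p (TT ℓ t) u k * tMat m n ℓ p x i j))) =
                sgn ((p i + p j) * (p h + p k)) •
                  (Phi m n ℓ p (TT ℓ (y :: t)) h k * tMat m n ℓ p x i j) := by
              rw [← Finset.smul_sum]
              congr 1
              rw [Phi_cons_apply, Finset.sum_mul]
              exact Finset.sum_congr rfl fun u _ => (mul_assoc _ _ _).symm
            have hB : (∑ u : Fin (m + n), sgn (p i * p j + p i * p h + p j * p h) •
                  (tMat m n ℓ p y h u *
                    ∑ s : Fin t.length,
                      (Phi m n ℓ p (TT ℓ (t.take (s : ℕ))) u j *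
                          Phi m n ℓ p (TT ℓ ((x * t.get s) :: t.drop ((s : ℕ) + 1))) i k -
                        Phi m n ℓ p (TT ℓ (t.take (s : ℕ) ++ [t.get s * x])) u j *
                          Phi m n ℓ p (TT ℓ (t.drop ((s : ℕ) + 1))) i k))) =
                sgn (p i * p j + p i * p h + p j * p h) •
                  ∑ s : Fin t.length,
                    (Phi m n ℓ p (TT ℓ (y :: t.take (s : ℕ))) h j *
                        Phi m n ℓ p (TT ℓ ((x * t.get s) :: t.drop ((s : ℕ) + 1))) i k -
                      Phi m n ℓ p (TT ℓ (y :: (t.take (s : ℕ) ++ [t.get s * x]))) h j *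
                        Phi m n ℓ p (TT ℓ (t.drop ((s : ℕ) + 1))) i k) := by
              rw [← Finset.smul_sum]
              congr 1
              calc (∑ u : Fin (m + n), tMat m n ℓ p y h u *
                      ∑ s : Fin t.length,
                        (Phi m n ℓ p (TT ℓ (t.take (s : ℕ))) u j *
                            Phi m n ℓ p (TT ℓ ((x * t.get s) :: t.drop ((s : ℕ) + 1))) i k -
                          Phi m n ℓ p (TT ℓ (t.take (s : ℕ) ++ [t.get s * x])) u j *
                            Phi m n ℓ p (TT ℓ (t.drop ((s : ℕ) + 1))) i k))
                  = ∑ u : Fin (m + n), ∑ s : Fin t.length,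
                      (tMat m n ℓ p y h u *
                          (Phi m n ℓ p (TT ℓ (t.take (s : ℕ))) u j *
                            Phi m n ℓ p (TT ℓ ((x * t.get s) :: t.drop ((s : ℕ) + 1))) i k) -
                        tMat m n ℓ p y h u *
                          (Phi m n ℓ p (TT ℓ (t.take (s : ℕ) ++ [t.get s * x])) u j *
                            Phi m n ℓ p (TT ℓ (t.drop ((s : ℕ) + 1))) i k)) := by
                    refine Finset.sum_congr rfl fun u _ => ?_
                    rw [Finset.mul_sum]
                    exact Finset.sum_congr rfl fun s _ => mul_sub _ _ _
                _ = ∑ s : Fin t.length, ∑ u : Fin (m + n),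
                      (tMat m n ℓ p y h u *
                          (Phi m n ℓ p (TT ℓ (t.take (s : ℕ))) u j *
                            Phi m n ℓ p (TT ℓ ((x * t.get s) :: t.drop ((s : ℕ) + 1))) i k) -
                        tMat m n ℓ p y h u *
                          (Phi m n ℓ p (TT ℓ (t.take (s : ℕ) ++ [t.get s * x])) u j *
                            Phi m n ℓ p (TT ℓ (t.drop ((s : ℕ) + 1))) i k)) := Finset.sum_comm
                _ = _ := by
                    refine Finset.sum_congr rfl fun s _ => ?_
                    rw [Finset.sum_sub_distrib]
                    congr 1
                    · rw [Phi_cons_apply m n ℓ p y (t.take (s : ℕ)) h j, Finset.sum_mul]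
                      exact Finset.sum_congr rfl fun u _ => (mul_assoc _ _ _).symm
                    · rw [Phi_cons_apply m n ℓ p y
                        (t.take (s : ℕ) ++ [t.get s * x]) h j, Finset.sum_mul]
                      exact Finset.sum_congr rfl fun u _ => (mul_assoc _ _ _).symm
            have hC : (∑ u : Fin (m + n), sgn (p i * p j + p i * p h + p j * p h) •
                  (((if j = h then tMat m n ℓ p (x * y) i u else 0) -
                      (if i = u then tMat m n ℓ p (y * x) h j else 0)) *
                    Phi m n ℓ p (TT ℓ t) u k)) =
                sgn (p i * p j + p i * p h + p j * p h) •
                  (Phi m n ℓ p (TT ℓ []) h j * Phi m n ℓ p (TT ℓ ((x * y) :: t)) i k -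
                    Phi m n ℓ p (TT ℓ [y * x]) h j * Phi m n ℓ p (TT ℓ t) i k) := by
              rw [← Finset.smul_sum]
              congr 1
              calc (∑ u : Fin (m + n),
                      ((if j = h then tMat m n ℓ p (x * y) i u else 0) -
                          (if i = u then tMat m n ℓ p (y * x) h j else 0)) *
                        Phi m n ℓ p (TT ℓ t) u k)
                  = (∑ u : Fin (m + n),
                      (if j = h then tMat m n ℓ p (x * y) i u else 0) *
                        Phi m n ℓ p (TT ℓ t) u k) -
                    ∑ u : Fin (m + n),
                      (if i = u then tMat m n ℓ p (y * x) h j else 0) *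
                        Phi m n ℓ p (TT ℓ t) u k := by
                    rw [← Finset.sum_sub_distrib]
                    exact Finset.sum_congr rfl fun u _ => sub_mul _ _ _
                _ = _ := by
                    congr 1
                    · by_cases hjh : j = h
                      · subst hjh
                        simp only [eq_self_iff_true, if_true]
                        rw [Phi_nil, Matrix.one_apply_eq, one_mul]
                        exact (Phi_cons_apply m n ℓ p (x * y) t i k).symm
                      · simp only [if_neg hjh, zero_mul, Finset.sum_const_zero]
                        rw [Phi_nil, Matrix.one_apply_ne (Ne.symm hjh), zero_mul]
                    · simp only [ite_mul, zero_mul, Finset.sum_ite_eq,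
                        Finset.mem_univ, if_true]
                      rw [Phi_single]
            rw [hA, hB, hC]
            simp only [List.length_cons]
            rw [Fin.sum_univ_succ, smul_add]
            simp only [Fin.val_zero, Fin.val_succ, List.take_zero, List.take_succ_cons,
              List.get_cons_zero, List.get_cons_succ, List.drop_succ_cons, List.drop_zero,
              List.nil_append, List.cons_append,
              show ∀ s : Fin t.length, (y :: t).get s.succ = t.get s from fun _ => rfl]
            rw [add_assoc]
            congr 1
            rw [add_comm]

/-- the supercommutator identity for the maps `t_{ij}`:
`[t_{ij}(x), t_{hk}(y_1 ⊗ ⋯ ⊗ y_r)] = (-1)^{p(i)p(j)+p(i)p(h)+p(j)p(h)}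
Σ_{s=1}^r (t_{hj}(y_1⊗⋯⊗y_{s-1}) t_{ik}(xy_s⊗⋯⊗y_r) -
t_{hj}(y_1⊗⋯⊗y_s x) t_{ik}(y_{s+1}⊗⋯⊗y_r))`. -/
theorem stmt2 (m n ℓ : ℕ) (hℓ : 0 < ℓ) (hmn : 0 < m + n)
    (p : Fin (m + n) → ZMod 2)
    (hp : (Finset.univ.filter fun i => p i = 0).card = m)
    (x : Matrix (Fin ℓ) (Fin ℓ) ℂ) (ys : List (Matrix (Fin ℓ) (Fin ℓ) ℂ))
    (hys : ys ≠ []) (i j h k : Fin (m + n)) :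
    Phi m n ℓ p (TT ℓ [x]) i j * Phi m n ℓ p (TT ℓ ys) h k -
        sgn ((p i + p j) * (p h + p k)) •
          (Phi m n ℓ p (TT ℓ ys) h k * Phi m n ℓ p (TT ℓ [x]) i j) =
      sgn (p i * p j + p i * p h + p j * p h) •
        ∑ s : Fin ys.length,
          (Phi m n ℓ p (TT ℓ (ys.take (s : ℕ))) h j *
              Phi m n ℓ p (TT ℓ ((x * ys.get s) :: ys.drop ((s : ℕ) + 1))) i k -
            Phi m n ℓ p (TT ℓ (ys.take (s : ℕ) ++ [ys.get s * x])) h j *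
              Phi m n ℓ p (TT ℓ (ys.drop ((s : ℕ) + 1))) i k) := by
  rw [Phi_single m n ℓ p x]
  exact sub_eq_of_eq_add' (key m n ℓ p x i j ys h k)

end
end

section
/- Fix 1 ≤ c ≤ ℓ−1 and let B be the (ℓ−c+1)×(ℓ−c+1) matrix over R[u] with entries: B_{1,1} = 1 and B_{1,j} = x_{c+1,c+j−1} for 2 ≤ j ≤ ℓ−c+1; B_{2,1} = 1, B_{2,2} = u + x_{c+1,c+1} + ρ_c, and B_{2,j} = x_{c+1,c+j−1} for 3 ≤ j ≤ ℓ−c+1; and B_{i,j} = A(u)_{c+i−1,c+j−1} for 3 ≤ i ≤ ℓ−c+1 and all 1 ≤ j ≤ ℓ−c+1. Then rdet B = (u+ρ_c)·rdet A_{c+2,ℓ}(u). -/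
open scoped BigOperators
open Polynomial

noncomputable section

/-- The row determinant of a `k × k` matrix over a (possibly noncommutative)
unital ring: `rdet B = Σ_σ sgn(σ) B_{1,σ(1)} ⋯ B_{k,σ(k)}` (product taken in
increasing row order); the `rdet` of the empty matrix is `1`. -/
def rdet {k : ℕ} {R : Type*} [Ring R] (B : Matrix (Fin k) (Fin k) R) : R :=
  ∑ σ : Equiv.Perm (Fin k),
    ((Equiv.Perm.sign σ : ℤ) : R) * (List.ofFn fun t => B t (σ t)).prod

/-- `ρ_r = -(ℓ-r)(m-n)` (here `r` is the 1-based index). -/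
def ρv (m n ℓ : ℕ) (r : ℕ) : ℂ :=
  -(((ℓ : ℂ) - (r : ℂ)) * ((m : ℂ) - (n : ℂ)))

/-- The `(a,b)` entry (1-based indices) of the matrix `A(u)` over `R[u]`:
`A(u)_{a,a} = u + x_{a,a} + ρ_a`, `A(u)_{a,b} = x_{a,b}` for `b > a`,
`A(u)_{a+1,a} = 1` and `A(u)_{a,b} = 0` for `a > b+1`. -/
def Aent (m n ℓ : ℕ) (R : Type*) [Ring R] [Algebra ℂ R] (x : ℕ → ℕ → R)
    (a b : ℕ) : Polynomial R :=
  if a = b then X + C (x a a) + C (algebraMap ℂ R (ρv m n ℓ a))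
  else if a < b then C (x a b)
  else if a = b + 1 then 1 else 0

open Equiv Equiv.Perm in
lemma prod_split_aux {S : Type*} [Ring S] {d : ℕ} (f : Fin (d+2) → S) :
    (List.ofFn f).prod = f 0 * (f 1 * (List.ofFn fun t : Fin d => f t.succ.succ).prod) := by
  rw [List.ofFn_succ, List.prod_cons, List.ofFn_succ, List.prod_cons, Fin.succ_zero_eq_one]

open Equiv Equiv.Perm Finset in
lemma rdet_aux {S : Type*} [Ring S] {d : ℕ} (M : Matrix (Fin (d+2)) (Fin (d+2)) S) (z : S)
    (h00 : M 0 0 = 1) (h10 : M 1 0 = 1)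
    (hcol : ∀ i : Fin (d+2), 2 ≤ (i:ℕ) → M i 0 = 0)
    (h11 : M 1 1 = M 0 1 + z)
    (hrow : ∀ j : Fin (d+2), 2 ≤ (j:ℕ) → M 1 j = M 0 j) :
    rdet M = z * rdet (Matrix.of fun i j : Fin d => M i.succ.succ j.succ.succ) := by
  classical
  set P : Perm (Fin (d+2)) → S :=
    fun σ => (List.ofFn fun t : Fin d => M t.succ.succ (σ t.succ.succ)).prod with hP
  set F : Perm (Fin (d+2)) → S :=
    fun σ => ((Equiv.Perm.sign σ : ℤ) : S) * (List.ofFn fun t => M t (σ t)).prod with hF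
  have hone : (0 : Fin (d+2)) ≠ 1 := by
    simp [Fin.ext_iff]
  have hss0 : ∀ t : Fin d, (t.succ.succ : Fin (d+2)) ≠ 0 := fun t => Fin.succ_ne_zero _
  have hss1 : ∀ t : Fin d, (t.succ.succ : Fin (d+2)) ≠ 1 := by
    intro t
    simp [Fin.ext_iff]
  have hge2 : ∀ i : Fin (d+2), i ≠ 0 → i ≠ 1 → 2 ≤ (i:ℕ) := by
    intro i i0 i1
    by_contra h
    push_neg at h
    have : (i:ℕ) = 0 ∨ (i:ℕ) = 1 := by omega
    rcases this with h' | h'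
    · exact i0 (Fin.ext (by simp [h']))
    · exact i1 (Fin.ext (by simp [h']))
  -- vanishing off the two filters
  have hzero : ∀ σ : Perm (Fin (d+2)), σ 0 ≠ 0 → σ 1 ≠ 0 → F σ = 0 := by
    intro σ h0 h1
    have hi : σ (σ⁻¹ 0) = 0 := σ.apply_symm_apply 0
    have e0 : σ⁻¹ 0 ≠ 0 := by
      intro h; apply h0; have := hi; rwa [h] at this
    have e1 : σ⁻¹ 0 ≠ 1 := by
      intro h; apply h1; have := hi; rwa [h] at this
    have hv : 2 ≤ ((σ⁻¹ 0 : Fin (d+2)) : ℕ) := hge2 _ e0 e1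
    have hmem : (0 : S) ∈ (List.ofFn fun t => M t (σ t)) := by
      simp only [List.mem_ofFn, Set.mem_range]
      refine ⟨σ⁻¹ 0, ?_⟩
      show M (σ⁻¹ 0) (σ (σ⁻¹ 0)) = 0
      rw [hi]; exact hcol _ hv
    show ((Equiv.Perm.sign σ : ℤ) : S) * (List.ofFn fun t => M t (σ t)).prod = 0
    rw [List.prod_eq_zero hmem, mul_zero]
  -- the key combination
  have key : ∀ σ : Perm (Fin (d+2)), σ 0 = 0 →
      F σ + F (σ * Equiv.swap (0 : Fin (d+2)) 1) =
        (if σ 1 = 1 then ((Equiv.Perm.sign σ : ℤ) : S) * (z * P σ) else 0) := by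
    intro σ h0
    have hs : Equiv.Perm.sign (σ * Equiv.swap (0 : Fin (d+2)) 1) = - Equiv.Perm.sign σ := by
      rw [Equiv.Perm.sign_mul, Equiv.Perm.sign_swap hone]
      · simp
    have ha0 : (σ * Equiv.swap (0 : Fin (d+2)) 1) 0 = σ 1 := by
      rw [Equiv.Perm.mul_apply, Equiv.swap_apply_left]
    have ha1 : (σ * Equiv.swap (0 : Fin (d+2)) 1) 1 = 0 := by
      rw [Equiv.Perm.mul_apply, Equiv.swap_apply_right, h0]
    have hat : ∀ t : Fin d, (σ * Equiv.swap (0 : Fin (d+2)) 1) t.succ.succ = σ t.succ.succ := by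
      intro t
      rw [Equiv.Perm.mul_apply, Equiv.swap_apply_of_ne_of_ne (hss0 t) (hss1 t)]
    have hFσ : F σ = ((Equiv.Perm.sign σ : ℤ) : S) * (M 1 (σ 1) * P σ) := by
      show ((Equiv.Perm.sign σ : ℤ) : S) * (List.ofFn fun t => M t (σ t)).prod = _
      rw [prod_split_aux (fun t => M t (σ t))]
      show ((Equiv.Perm.sign σ : ℤ) : S) * (M 0 (σ 0) * (M 1 (σ 1) * _)) = _
      rw [h0, h00, one_mul]
    have hPeq : P (σ * Equiv.swap (0 : Fin (d+2)) 1) = P σ := by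
      show (List.ofFn fun t : Fin d => M t.succ.succ ((σ * Equiv.swap (0 : Fin (d+2)) 1) t.succ.succ)).prod = _
      congr 1
    have hFσ' : F (σ * Equiv.swap (0 : Fin (d+2)) 1) =
        -(((Equiv.Perm.sign σ : ℤ) : S) * (M 0 (σ 1) * P σ)) := by
      show ((Equiv.Perm.sign (σ * Equiv.swap (0 : Fin (d+2)) 1) : ℤ) : S) *
        (List.ofFn fun t => M t ((σ * Equiv.swap (0 : Fin (d+2)) 1) t)).prod = _
      rw [prod_split_aux (fun t => M t ((σ * Equiv.swap (0 : Fin (d+2)) 1) t))]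
      show _ * (M 0 ((σ * Equiv.swap (0 : Fin (d+2)) 1) 0) * (M 1 ((σ * Equiv.swap (0 : Fin (d+2)) 1) 1) * _)) = _
      rw [ha0, ha1, h10, one_mul, hs]
      have : (List.ofFn fun t : Fin d => M t.succ.succ ((σ * Equiv.swap (0 : Fin (d+2)) 1) t.succ.succ)).prod
          = P σ := hPeq
      rw [this]
      push_cast
      rw [neg_mul]
    rw [hFσ, hFσ', ← sub_eq_add_neg, ← mul_sub, ← sub_mul]
    by_cases h1 : σ 1 = 1
    · rw [if_pos h1, h1, h11, add_sub_cancel_left]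
    · rw [if_neg h1]
      have hne0 : σ 1 ≠ 0 := by
        intro h; exact hone (σ.injective (h0.trans h.symm))
      have hv : 2 ≤ ((σ 1 : Fin (d+2)) : ℕ) := hge2 _ hne0 h1
      rw [hrow _ hv, sub_self, zero_mul, mul_zero]
  -- assemble
  have step1 : rdet M = ∑ σ ∈ univ.filter (fun σ : Perm (Fin (d+2)) => σ 0 = 0), F σ
      + ∑ σ ∈ univ.filter (fun σ : Perm (Fin (d+2)) => σ 1 = 0), F σ := by
    have hsub : univ.filter (fun σ : Perm (Fin (d+2)) => σ 1 = 0) ⊆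
        univ.filter (fun σ : Perm (Fin (d+2)) => ¬ σ 0 = 0) := by
      intro σ hσ
      simp only [mem_filter, mem_univ, true_and] at hσ ⊢
      intro h
      exact hone (σ.injective (h.trans hσ.symm))
    have h2 : ∑ σ ∈ univ.filter (fun σ : Perm (Fin (d+2)) => ¬ σ 0 = 0), F σ
        = ∑ σ ∈ univ.filter (fun σ : Perm (Fin (d+2)) => σ 1 = 0), F σ := by
      symm
      apply Finset.sum_subset hsub
      intro σ hσ h'
      simp only [mem_filter, mem_univ, true_and] at hσ h'
      exact hzero σ hσ h'
    rw [show rdet M = ∑ σ : Perm (Fin (d+2)), F σ from rfl,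
      ← Finset.sum_filter_add_sum_filter_not univ (fun σ : Perm (Fin (d+2)) => σ 0 = 0) F, h2]
  have step2 : ∑ σ ∈ univ.filter (fun σ : Perm (Fin (d+2)) => σ 1 = 0), F σ
      = ∑ σ ∈ univ.filter (fun σ : Perm (Fin (d+2)) => σ 0 = 0), F (σ * Equiv.swap (0 : Fin (d+2)) 1) := by
    apply Finset.sum_nbij' (i := fun σ => σ * Equiv.swap (0 : Fin (d+2)) 1) (j := fun σ => σ * Equiv.swap (0 : Fin (d+2)) 1)
    · intro σ hσ
      simp only [mem_filter, mem_univ, true_and] at hσ ⊢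
      rw [Equiv.Perm.mul_apply, Equiv.swap_apply_left, hσ]
    · intro σ hσ
      simp only [mem_filter, mem_univ, true_and] at hσ ⊢
      rw [Equiv.Perm.mul_apply, Equiv.swap_apply_right, hσ]
    · intro σ _
      rw [mul_assoc, Equiv.swap_mul_self, mul_one]
    · intro σ _
      rw [mul_assoc, Equiv.swap_mul_self, mul_one]
    · intro σ _
      rw [mul_assoc, Equiv.swap_mul_self, mul_one]
  have step3 : rdet M = ∑ σ ∈ univ.filter
      (fun σ : Perm (Fin (d+2)) => σ 0 = 0 ∧ σ 1 = 1),
      ((Equiv.Perm.sign σ : ℤ) : S) * (z * P σ) := by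
    rw [step1, step2, ← Finset.sum_add_distrib]
    rw [Finset.sum_congr rfl (fun σ hσ => key σ (by simpa using (mem_filter.mp hσ).2))]
    rw [← Finset.sum_filter, Finset.filter_filter]
  rw [step3]
  -- final reindexing
  rw [rdet, Finset.mul_sum]
  apply Finset.sum_nbij'
    (i := fun σ => (Equiv.Perm.decomposeFin ((Equiv.Perm.decomposeFin σ).2)).2)
    (j := fun τ => Equiv.Perm.decomposeFin.symm (0, Equiv.Perm.decomposeFin.symm (0, τ)))
  · intro σ _; exact mem_univ _
  · intro τ _
    simp only [mem_filter, mem_univ, true_and]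
    constructor
    · rw [Equiv.Perm.decomposeFin_symm_apply_zero]
    · rw [Equiv.Perm.decomposeFin_symm_apply_one, Equiv.Perm.decomposeFin_symm_apply_zero]
      simp [Fin.succ_zero_eq_one]
  · intro σ hσ
    simp only [mem_filter, mem_univ, true_and] at hσ
    obtain ⟨h0, h1⟩ := hσ
    have e1 : (Equiv.Perm.decomposeFin σ).1 = 0 := by
      have := Equiv.Perm.decomposeFin_symm_apply_zero (Equiv.Perm.decomposeFin σ).1
        (Equiv.Perm.decomposeFin σ).2
      rw [Prod.mk.eta, Equiv.symm_apply_apply] at this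
      exact this.symm.trans h0
    have hσeq : σ = Equiv.Perm.decomposeFin.symm (0, (Equiv.Perm.decomposeFin σ).2) := by
      rw [← e1, Prod.mk.eta, Equiv.symm_apply_apply]
    set π := (Equiv.Perm.decomposeFin σ).2 with hπ
    have e2 : (Equiv.Perm.decomposeFin π).1 = 0 := by
      have h1' : σ 1 = 1 := h1
      rw [hσeq, Equiv.Perm.decomposeFin_symm_apply_one] at h1'
      rw [Equiv.swap_self, Equiv.refl_apply, ← Fin.succ_zero_eq_one] at h1'
      have := Fin.succ_injective _ h1'
      have e2' := Equiv.Perm.decomposeFin_symm_apply_zero (Equiv.Perm.decomposeFin π).1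
        (Equiv.Perm.decomposeFin π).2
      rw [Prod.mk.eta, Equiv.symm_apply_apply] at e2'
      exact e2'.symm.trans this
    have hπeq : π = Equiv.Perm.decomposeFin.symm (0, (Equiv.Perm.decomposeFin π).2) := by
      rw [← e2, Prod.mk.eta, Equiv.symm_apply_apply]
    conv_rhs => rw [hσeq, hπeq]
  · intro τ _
    simp [Equiv.apply_symm_apply]
  · intro σ hσ
    simp only [mem_filter, mem_univ, true_and] at hσ
    obtain ⟨h0, h1⟩ := hσ
    -- reuse the reconstruction
    have e1 : (Equiv.Perm.decomposeFin σ).1 = 0 := by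
      have := Equiv.Perm.decomposeFin_symm_apply_zero (Equiv.Perm.decomposeFin σ).1
        (Equiv.Perm.decomposeFin σ).2
      rw [Prod.mk.eta, Equiv.symm_apply_apply] at this
      exact this.symm.trans h0
    have hσeq : σ = Equiv.Perm.decomposeFin.symm (0, (Equiv.Perm.decomposeFin σ).2) := by
      rw [← e1, Prod.mk.eta, Equiv.symm_apply_apply]
    set π := (Equiv.Perm.decomposeFin σ).2 with hπ
    have e2 : (Equiv.Perm.decomposeFin π).1 = 0 := by
      have h1' : σ 1 = 1 := h1
      rw [hσeq, Equiv.Perm.decomposeFin_symm_apply_one] at h1'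
      rw [Equiv.swap_self, Equiv.refl_apply, ← Fin.succ_zero_eq_one] at h1'
      have := Fin.succ_injective _ h1'
      have e2' := Equiv.Perm.decomposeFin_symm_apply_zero (Equiv.Perm.decomposeFin π).1
        (Equiv.Perm.decomposeFin π).2
      rw [Prod.mk.eta, Equiv.symm_apply_apply] at e2'
      exact e2'.symm.trans this
    have hπeq : π = Equiv.Perm.decomposeFin.symm (0, (Equiv.Perm.decomposeFin π).2) := by
      rw [← e2, Prod.mk.eta, Equiv.symm_apply_apply]
    set τ := (Equiv.Perm.decomposeFin π).2 with hτ
    have happ : ∀ t : Fin d, σ t.succ.succ = (τ t).succ.succ := by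
      intro t
      conv_lhs => rw [hσeq]
      rw [show (t.succ.succ : Fin (d+2)) = (t.succ : Fin (d+1)).succ from rfl]
      rw [Equiv.Perm.decomposeFin_symm_apply_succ]
      rw [Equiv.swap_self, Equiv.refl_apply]
      conv_lhs => rw [hπeq]
      rw [Equiv.Perm.decomposeFin_symm_apply_succ]
      rw [Equiv.swap_self, Equiv.refl_apply]
    have hsgn : Equiv.Perm.sign σ = Equiv.Perm.sign τ := by
      conv_lhs => rw [hσeq]
      rw [Equiv.Perm.decomposeFin.symm_sign, if_pos rfl, one_mul]
      conv_lhs => rw [hπeq]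
      rw [Equiv.Perm.decomposeFin.symm_sign, if_pos rfl, one_mul]
    rw [hsgn, hP]
    simp only [Matrix.of_apply]
    have hprod : (List.ofFn fun t : Fin d => M t.succ.succ (σ t.succ.succ))
        = (List.ofFn fun t : Fin d => M t.succ.succ ((τ t).succ.succ)) := by
      simp only [happ]
    rw [hprod]
    rw [← mul_assoc, (Int.cast_commute ((Equiv.Perm.sign τ : ℤ)) z).eq, mul_assoc]



/-- for `1 ≤ c ≤ ℓ-1`, the `(ℓ-c+1) × (ℓ-c+1)` matrix `B` obtained
from `A_{c+1,ℓ}(u)` by prepending the row `(1, x_{c+1,c+1}, …, x_{c+1,ℓ})` and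
replacing the `(2,2)` entry by `u + x_{c+1,c+1} + ρ_c` satisfies
`rdet B = (u + ρ_c) ⬝ rdet A_{c+2,ℓ}(u)`. -/
theorem stmt5 (m n ℓ : ℕ) (hℓ : 0 < ℓ) (R : Type*) [Ring R] [Algebra ℂ R]
    (x : ℕ → ℕ → R) (c : ℕ) (hc1 : 1 ≤ c) (hc2 : c ≤ ℓ - 1) :
    rdet (Matrix.of fun i j : Fin (ℓ - c + 1) =>
        if (i : ℕ) = 0 then
          (if (j : ℕ) = 0 then 1 else C (x (c + 1) (c + (j : ℕ))))
        else if (i : ℕ) = 1 then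
          (if (j : ℕ) = 0 then 1
           else if (j : ℕ) = 1 then
             X + C (x (c + 1) (c + 1)) + C (algebraMap ℂ R (ρv m n ℓ c))
           else C (x (c + 1) (c + (j : ℕ))))
        else Aent m n ℓ R x (c + (i : ℕ)) (c + (j : ℕ))) =
      (X + C (algebraMap ℂ R (ρv m n ℓ c))) *
        rdet (Matrix.of fun i j : Fin (ℓ - c - 1) =>
          Aent m n ℓ R x (c + 2 + (i : ℕ)) (c + 2 + (j : ℕ))) := by
  obtain ⟨d, hd⟩ : ∃ d, ℓ - c = d + 1 := ⟨ℓ - c - 1, by omega⟩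
  rw [show ℓ - c + 1 = d + 2 from by omega, show ℓ - c - 1 = d from by omega]
  rw [rdet_aux (Matrix.of fun i j : Fin (d + 2) =>
        if (i : ℕ) = 0 then
          (if (j : ℕ) = 0 then 1 else C (x (c + 1) (c + (j : ℕ))))
        else if (i : ℕ) = 1 then
          (if (j : ℕ) = 0 then 1
           else if (j : ℕ) = 1 then
             X + C (x (c + 1) (c + 1)) + C (algebraMap ℂ R (ρv m n ℓ c))
           else C (x (c + 1) (c + (j : ℕ))))
        else Aent m n ℓ R x (c + (i : ℕ)) (c + (j : ℕ)))
      (X + C (algebraMap ℂ R (ρv m n ℓ c))) ?h00 ?h10 ?hcol ?h11 ?hrow]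
  case h00 => simp
  case h10 => simp
  case hcol =>
    intro i hi
    simp only [Matrix.of_apply, Fin.val_zero]
    rw [if_neg (by omega), if_neg (by omega)]
    unfold Aent
    rw [if_neg (by omega), if_neg (by omega), if_neg (by omega)]
  case h11 =>
    simp only [Matrix.of_apply, Fin.val_one, Fin.val_zero]
    norm_num
    abel
  case hrow =>
    intro j hj
    have h0 : (j:ℕ) ≠ 0 := by omega
    have h1 : (j:ℕ) ≠ 1 := by omega
    simp [Matrix.of_apply, h0, h1]
  congr 2
  ext i j
  simp only [Matrix.of_apply, Fin.val_succ]
  rw [if_neg (by omega), if_neg (by omega),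
    show c + (↑i + 1 + 1) = c + 2 + (i:ℕ) from by omega,
    show c + (↑j + 1 + 1) = c + 2 + (j:ℕ) from by omega]


end
end

section
/- Fix 1 ≤ c ≤ ℓ−1 and let B′ be the (c+1)×(c+1) matrix over R[u] with entries: B′_{i,j} = A(u)_{i,j} for 1 ≤ i,j ≤ c; B′_{i,c+1} = x_{i,c} for 1 ≤ i ≤ c; B′_{c+1,j} = 0 for 1 ≤ j ≤ c−1; and B′_{c+1,c} = B′_{c+1,c+1} = 1. Then rdet B′ = (u+ρ_c)·rdet A_{1,c−1}(u). -/
open scoped BigOperators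
open Polynomial

noncomputable section

section RdetAux

variable {S : Type*} [Ring S]

lemma ofFn_update_eq_set {k : ℕ} (F : Fin k → S) (t : Fin k) (v : S) :
    List.ofFn (Function.update F t v) = (List.ofFn F).set (t : ℕ) v := by
  apply List.ext_getElem
  · simp
  · intro i h1 h2
    simp only [List.length_ofFn] at h1 h2
    rw [List.getElem_ofFn, List.getElem_set]
    by_cases h : (t : ℕ) = i
    · rw [if_pos h]
      have ht : (⟨i, h1⟩ : Fin k) = t := Fin.ext h.symm
      rw [ht, Function.update_self]
    · rw [if_neg h, Function.update_of_ne (by simp only [ne_eq, Fin.ext_iff]; omega),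
        List.getElem_ofFn]

lemma prod_ofFn_update_add {k : ℕ} (F : Fin k → S) (t : Fin k) (a b : S) :
    (List.ofFn (Function.update F t (a + b))).prod
      = (List.ofFn (Function.update F t a)).prod
        + (List.ofFn (Function.update F t b)).prod := by
  simp only [ofFn_update_eq_set, List.prod_set]
  have ht : (t : ℕ) < (List.ofFn F).length := by simp
  simp [ht, mul_add, add_mul]

lemma rdet_updateColumn_add {k : ℕ} (M : Matrix (Fin k) (Fin k) S) (j : Fin k)
    (f g : Fin k → S) :
    rdet (M.updateCol j (fun i => f i + g i))
      = rdet (M.updateCol j f) + rdet (M.updateCol j g) := by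
  unfold rdet
  rw [← Finset.sum_add_distrib]
  apply Finset.sum_congr rfl
  intro σ _
  have key : ∀ h : Fin k → S,
      (fun t => (M.updateCol j h) t (σ t))
        = Function.update (fun t => M t (σ t)) (σ⁻¹ j) (h (σ⁻¹ j)) := by
    intro h
    funext t
    by_cases ht : t = σ⁻¹ j
    · subst ht
      simp [Matrix.updateCol_apply]
    · have hne : σ t ≠ j := by
        intro hc
        exact ht (by rw [← hc]; exact (Equiv.symm_apply_apply σ t).symm)
      simp [Matrix.updateCol_apply, hne, Function.update_of_ne (show t ≠ σ.symm j from ht)]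
  rw [key, key, key]
  rw [prod_ofFn_update_add, mul_add]

lemma rdet_eq_zero_of_column_eq {k : ℕ} (M : Matrix (Fin k) (Fin k) S) (j₀ j₁ : Fin k)
    (hne : j₀ ≠ j₁) (h : ∀ i, M i j₀ = M i j₁) : rdet M = 0 := by
  unfold rdet
  apply Finset.sum_ninvolution (g := fun σ => Equiv.swap j₀ j₁ * σ)
  · intro σ
    have hsign : ((Equiv.Perm.sign (Equiv.swap j₀ j₁ * σ) : ℤ) : S)
        = - ((Equiv.Perm.sign σ : ℤ) : S) := by
      rw [Equiv.Perm.sign_mul, Equiv.Perm.sign_swap hne]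
      push_cast
      rw [neg_one_mul]
    have hfun : (fun t => M t ((Equiv.swap j₀ j₁ * σ) t)) = fun t => M t (σ t) := by
      funext t
      simp only [Equiv.Perm.mul_apply]
      rcases eq_or_ne (σ t) j₀ with h0 | h0
      · rw [h0, Equiv.swap_apply_left, ← h]
      rcases eq_or_ne (σ t) j₁ with h1 | h1
      · rw [h1, Equiv.swap_apply_right, h]
      · rw [Equiv.swap_apply_of_ne_of_ne h0 h1]
    rw [hfun, hsign, neg_mul, add_neg_cancel]
  · intro σ _
    intro hc
    have : Equiv.swap j₀ j₁ = 1 := by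
      calc Equiv.swap j₀ j₁ = Equiv.swap j₀ j₁ * σ * σ⁻¹ := by group
        _ = σ * σ⁻¹ := by rw [hc]
        _ = 1 := by group
    exact hne (Equiv.swap_eq_one_iff.mp this)
  · intro σ
    exact Finset.mem_univ _
  · intro σ
    rw [← mul_assoc, Equiv.swap_mul_self, one_mul]

end RdetAux



section Exp

variable {S : Type*} [Ring S]

def embLast {k : ℕ} (τ : Equiv.Perm (Fin k)) : Equiv.Perm (Fin (k + 1)) :=
  (finSuccEquivLast.symm.permCongr) τ.optionCongr

lemma embLast_castSucc {k : ℕ} (τ : Equiv.Perm (Fin k)) (i : Fin k) :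
    embLast τ i.castSucc = (τ i).castSucc := by
  simp [embLast, Equiv.permCongr_apply]

lemma embLast_last {k : ℕ} (τ : Equiv.Perm (Fin k)) :
    embLast τ (Fin.last k) = Fin.last k := by
  simp [embLast, Equiv.permCongr_apply]

lemma embLast_sign {k : ℕ} (τ : Equiv.Perm (Fin k)) :
    Equiv.Perm.sign (embLast τ) = Equiv.Perm.sign τ := by
  rw [embLast, Equiv.Perm.sign_permCongr, Equiv.optionCongr_sign]

lemma optionCongr_removeNone {α : Type*} (π : Equiv.Perm (Option α))
    (h : π none = none) : Equiv.optionCongr (Equiv.removeNone π) = π := by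
  apply Equiv.ext
  intro o
  cases o with
  | none => simp [h]
  | some a =>
    have hx : ∃ x', π (some a) = some x' := by
      cases h1 : π (some a) with
      | none => exact absurd (π.injective (h1.trans h.symm)) (by simp)
      | some b => exact ⟨b, rfl⟩
    simp only [Equiv.optionCongr_apply, Option.map_some]
    exact Equiv.removeNone_some π hx

def backLast {k : ℕ} (σ : Equiv.Perm (Fin (k + 1))) : Equiv.Perm (Fin k) :=
  Equiv.removeNone (finSuccEquivLast.permCongr σ)

lemma backLast_embLast {k : ℕ} (τ : Equiv.Perm (Fin k)) : backLast (embLast τ) = τ := by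
  rw [backLast, embLast]
  have : finSuccEquivLast.permCongr ((finSuccEquivLast.symm.permCongr) τ.optionCongr)
      = τ.optionCongr := by
    rw [← Equiv.permCongr_symm]
    exact (Equiv.permCongr finSuccEquivLast).apply_symm_apply _
  rw [this, Equiv.removeNone_optionCongr]

lemma embLast_backLast {k : ℕ} (σ : Equiv.Perm (Fin (k + 1)))
    (h : σ (Fin.last k) = Fin.last k) : embLast (backLast σ) = σ := by
  rw [backLast, embLast]
  have hnone : (finSuccEquivLast.permCongr σ) none = none := by
    simp [Equiv.permCongr_apply, h]
  rw [optionCongr_removeNone _ hnone, ← Equiv.permCongr_symm]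
  exact (Equiv.permCongr finSuccEquivLast).symm_apply_apply _

lemma rdet_fix_last {k : ℕ} (M : Matrix (Fin (k + 1)) (Fin (k + 1)) S)
    (h0 : ∀ σ : Equiv.Perm (Fin (k + 1)), σ (Fin.last k) ≠ Fin.last k →
      (List.ofFn fun t => M t (σ t)).prod = 0) :
    rdet M = rdet (Matrix.of fun i j : Fin k => M i.castSucc j.castSucc)
      * M (Fin.last k) (Fin.last k) := by
  unfold rdet
  rw [Finset.sum_mul]
  have hfil : ∀ σ ∈ (Finset.univ : Finset (Equiv.Perm (Fin (k + 1)))),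
      ((Equiv.Perm.sign σ : ℤ) : S) * (List.ofFn fun t => M t (σ t)).prod ≠ 0 →
      σ (Fin.last k) = Fin.last k := by
    intro σ _ hσ
    by_contra hcon
    exact hσ (by rw [h0 σ hcon, mul_zero])
  rw [← Finset.sum_filter_of_ne hfil]
  refine Finset.sum_nbij' (i := fun σ => backLast σ) (j := fun τ => embLast τ)
    ?_ ?_ ?_ ?_ ?_
  · intro σ _
    exact Finset.mem_univ _
  · intro τ _
    simp only [Finset.mem_filter, Finset.mem_univ, true_and]
    exact embLast_last τ
  · intro σ hσ
    simp only [Finset.mem_filter, Finset.mem_univ, true_and] at hσ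
    exact embLast_backLast σ hσ
  · intro τ _
    exact backLast_embLast τ
  · intro σ hσ
    simp only [Finset.mem_filter, Finset.mem_univ, true_and] at hσ
    -- f σ = g (backLast σ)
    beta_reduce
    conv_lhs => rw [← embLast_backLast σ hσ]
    generalize backLast σ = τ
    rw [embLast_sign]
    have hlist : (List.ofFn fun t : Fin (k + 1) => M t (embLast τ t))
        = (List.ofFn fun t : Fin k =>
            (Matrix.of fun i j : Fin k => M i.castSucc j.castSucc) t (τ t)).concat
          (M (Fin.last k) (Fin.last k)) := by
      rw [List.ofFn_succ']
      congr 1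
      · congr 1
        funext t
        rw [embLast_castSucc]
        rfl
      · rw [embLast_last]
    rw [hlist, List.prod_concat, ← mul_assoc]

end Exp



section Cor

variable {S : Type*} [Ring S]

lemma rdet_lastRow {k : ℕ} (M : Matrix (Fin (k + 1)) (Fin (k + 1)) S)
    (h : ∀ j : Fin (k + 1), j ≠ Fin.last k → M (Fin.last k) j = 0) :
    rdet M = rdet (Matrix.of fun i j : Fin k => M i.castSucc j.castSucc)
      * M (Fin.last k) (Fin.last k) := by
  apply rdet_fix_last
  intro σ hσ
  have hz : M (Fin.last k) (σ (Fin.last k)) = 0 := h _ hσ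
  have hmem : (0 : S) ∈ List.ofFn fun t => M t (σ t) := by
    rw [List.mem_ofFn]
    exact ⟨Fin.last k, hz⟩
  exact List.prod_eq_zero hmem

lemma rdet_lastCol {k : ℕ} (M : Matrix (Fin (k + 1)) (Fin (k + 1)) S)
    (h : ∀ i : Fin (k + 1), i ≠ Fin.last k → M i (Fin.last k) = 0) :
    rdet M = rdet (Matrix.of fun i j : Fin k => M i.castSucc j.castSucc)
      * M (Fin.last k) (Fin.last k) := by
  apply rdet_fix_last
  intro σ hσ
  set t := σ⁻¹ (Fin.last k) with ht
  have hst : σ t = Fin.last k := by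
    rw [ht]
    exact Equiv.apply_symm_apply σ _
  have htne : t ≠ Fin.last k := by
    intro hc
    rw [hc] at hst
    exact hσ hst
  have hz : M t (σ t) = 0 := by
    rw [hst]
    exact h _ htne
  have hmem : (0 : S) ∈ List.ofFn fun t => M t (σ t) := by
    rw [List.mem_ofFn]
    exact ⟨t, hz⟩
  exact List.prod_eq_zero hmem

end Cor



/-- for `1 ≤ c ≤ ℓ-1`, the `(c+1) × (c+1)` matrix `B'` obtained
from `A_{1,c}(u)` by appending the column `(x_{1,c}, …, x_{c,c})` and the row
`(0, …, 0, 1, 1)` satisfies `rdet B' = (u + ρ_c) ⬝ rdet A_{1,c-1}(u)`. -/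
theorem stmt6 (m n ℓ : ℕ) (hℓ : 0 < ℓ) (R : Type*) [Ring R] [Algebra ℂ R]
    (x : ℕ → ℕ → R) (c : ℕ) (hc1 : 1 ≤ c) (hc2 : c ≤ ℓ - 1) :
    rdet (Matrix.of fun i j : Fin (c + 1) =>
        if (i : ℕ) < c then
          (if (j : ℕ) < c then Aent m n ℓ R x ((i : ℕ) + 1) ((j : ℕ) + 1)
           else C (x ((i : ℕ) + 1) c))
        else (if (j : ℕ) + 1 < c then 0 else 1)) =
      (X + C (algebraMap ℂ R (ρv m n ℓ c))) *
        rdet (Matrix.of fun i j : Fin (c - 1) =>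
          Aent m n ℓ R x ((i : ℕ) + 1) ((j : ℕ) + 1)) := by

  obtain ⟨k, rfl⟩ : ∃ k, c = k + 1 := ⟨c - 1, (Nat.succ_pred_eq_of_pos hc1).symm⟩
  clear hc2 hℓ
  set ρc : Polynomial R := X + C (algebraMap ℂ R (ρv m n ℓ (k + 1))) with hρ
  set N : Matrix (Fin (k + 1 + 1)) (Fin (k + 1 + 1)) (Polynomial R) :=
    Matrix.of (fun i j : Fin (k + 1 + 1) =>
      if (i : ℕ) < k + 1 then
        (if (j : ℕ) < k + 1 then Aent m n ℓ R x ((i : ℕ) + 1) ((j : ℕ) + 1)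
         else C (x ((i : ℕ) + 1) (k + 1)))
      else (if (j : ℕ) + 1 < k + 1 then 0 else 1)) with hN
  set Abb : Matrix (Fin k) (Fin k) (Polynomial R) :=
    Matrix.of (fun i j : Fin k =>
      Aent m n ℓ R x ((i : ℕ) + 1) ((j : ℕ) + 1)) with hAbb
  show rdet N = ρc * rdet Abb
  have hNentry : ∀ i j : Fin (k + 1 + 1), N i j =
      if (i : ℕ) < k + 1 then
        (if (j : ℕ) < k + 1 then Aent m n ℓ R x ((i : ℕ) + 1) ((j : ℕ) + 1)
         else C (x ((i : ℕ) + 1) (k + 1)))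
      else (if (j : ℕ) + 1 < k + 1 then 0 else 1) := fun i j => rfl
  have hj₀lt : k < k + 1 + 1 := by omega
  set j₀ : Fin (k + 1 + 1) := ⟨k, hj₀lt⟩ with hj₀
  have hjv : (j₀ : ℕ) = k := rfl
  have hlv : ((Fin.last (k + 1)) : ℕ) = k + 1 := rfl
  -- Step 1: column decomposition
  have step1 : N = N.updateCol j₀
      (fun i => (if (i : ℕ) = k then ρc else 0) + N i (Fin.last (k + 1))) := by
    funext i j
    have hi2 := i.isLt
    rw [Matrix.updateCol_apply]
    beta_reduce
    rcases eq_or_ne j j₀ with hj | hj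
    · rw [if_pos hj, hj, hNentry, hNentry, hjv, hlv]
      rcases lt_trichotomy (i : ℕ) k with hik | hik | hik
      · rw [if_pos (show (i : ℕ) < k + 1 by omega),
          if_pos (show k < k + 1 by omega),
          if_neg (show ¬(i : ℕ) = k by omega),
          if_pos (show (i : ℕ) < k + 1 by omega),
          if_neg (show ¬(k + 1 < k + 1) by omega), zero_add]
        simp only [Aent]
        rw [if_neg (show ¬((i : ℕ) + 1 = k + 1) by omega),
          if_pos (show (i : ℕ) + 1 < k + 1 by omega)]
      · rw [if_pos (show (i : ℕ) < k + 1 by omega),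
          if_pos (show k < k + 1 by omega),
          if_pos hik,
          if_pos (show (i : ℕ) < k + 1 by omega),
          if_neg (show ¬(k + 1 < k + 1) by omega), hik]
        have hAd : Aent m n ℓ R x (k + 1) (k + 1)
            = X + C (x (k + 1) (k + 1)) + C (algebraMap ℂ R (ρv m n ℓ (k + 1))) := by
          simp [Aent]
        rw [hAd, hρ, add_right_comm]
      · rw [if_neg (show ¬(i : ℕ) < k + 1 by omega),
          if_neg (show ¬(k + 1 < k + 1) by omega),
          if_neg (show ¬(i : ℕ) = k by omega),
          if_neg (show ¬(i : ℕ) < k + 1 by omega),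
          if_neg (show ¬(k + 1 + 1 < k + 1) by omega), zero_add]
    · rw [if_neg hj]
  rw [step1, rdet_updateColumn_add]
  have hE : rdet (N.updateCol j₀ (fun i => N i (Fin.last (k + 1)))) = 0 := by
    apply rdet_eq_zero_of_column_eq _ j₀ (Fin.last (k + 1))
    · simp only [ne_eq, Fin.ext_iff, hjv, hlv]
      omega
    · intro i
      rw [Matrix.updateCol_apply, Matrix.updateCol_apply, if_pos rfl,
        if_neg (by simp only [Fin.ext_iff, hjv, hlv]; omega)]
  rw [hE, add_zero]
  -- Step 2: expand along the last row
  rw [rdet_lastRow (k := k + 1)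
    (M := N.updateCol j₀ (fun i => if (i : ℕ) = k then ρc else 0))
    (by
      intro j hjne
      have hj2 := j.isLt
      have hjv2 : (j : ℕ) ≠ k + 1 := by
        rw [Ne, Fin.ext_iff, hlv] at hjne
        exact hjne
      rw [Matrix.updateCol_apply]
      beta_reduce
      rcases eq_or_ne j j₀ with hj | hj
      · rw [if_pos hj, if_neg (show ¬((Fin.last (k + 1) : ℕ) = k) by
          simp only [hlv]; omega)]
      · have hjk : (j : ℕ) ≠ k := by
          intro hc
          exact hj (Fin.ext (by rw [hc, hjv]))
        rw [if_neg hj, hNentry,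
          if_neg (show ¬((Fin.last (k + 1) : ℕ) < k + 1) by simp only [hlv]; omega),
          if_pos (show (j : ℕ) + 1 < k + 1 by omega)])]
  have hDll : (N.updateCol j₀ (fun i => if (i : ℕ) = k then ρc else 0))
      (Fin.last (k + 1)) (Fin.last (k + 1)) = 1 := by
    rw [Matrix.updateCol_apply,
      if_neg (by simp only [Fin.ext_iff, hjv, hlv]; omega), hNentry,
      if_neg (show ¬((Fin.last (k + 1) : ℕ) < k + 1) by simp only [hlv]; omega),
      if_neg (show ¬((Fin.last (k + 1) : ℕ) + 1 < k + 1) by simp only [hlv]; omega)]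
  rw [hDll, mul_one]
  have hcse : ((Fin.last k).castSucc : Fin (k + 1 + 1)) = j₀ := rfl
  -- Step 3: expand along the last column
  rw [rdet_lastCol (k := k)
    (M := Matrix.of fun i j : Fin (k + 1) =>
      (N.updateCol j₀ (fun i => if (i : ℕ) = k then ρc else 0))
        i.castSucc j.castSucc)
    (by
      intro i hine
      have hi2 := i.isLt
      have hiv : (i : ℕ) ≠ k := by
        rwa [Ne, Fin.ext_iff, Fin.val_last] at hine
      rw [Matrix.of_apply, hcse, Matrix.updateCol_apply, if_pos rfl]
      beta_reduce
      rw [if_neg (by rwa [Fin.coe_castSucc])])]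
  have hBll : (Matrix.of fun i j : Fin (k + 1) =>
      (N.updateCol j₀ (fun i => if (i : ℕ) = k then ρc else 0))
        i.castSucc j.castSucc) (Fin.last k) (Fin.last k) = ρc := by
    rw [Matrix.of_apply, hcse, Matrix.updateCol_apply, if_pos rfl]
    beta_reduce
    rw [if_pos hjv]
  rw [hBll]
  -- Step 4: the core block is Abb
  have hblock : (Matrix.of fun i j : Fin k =>
      (Matrix.of fun i j : Fin (k + 1) =>
        (N.updateCol j₀ (fun i => if (i : ℕ) = k then ρc else 0))
          i.castSucc j.castSucc) i.castSucc j.castSucc) = Abb := by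
    funext i j
    have hi2 := i.isLt
    have hj2 := j.isLt
    rw [Matrix.of_apply, Matrix.of_apply, Matrix.updateCol_apply,
      if_neg (by
        simp only [Fin.ext_iff, Fin.coe_castSucc, hjv]
        omega), hNentry]
    rw [hAbb, Matrix.of_apply,
      if_pos (by simp only [Fin.coe_castSucc]; omega),
      if_pos (by simp only [Fin.coe_castSucc]; omega)]
    simp only [Fin.coe_castSucc]
  rw [hblock]
  -- Step 5: commute the central factor
  rw [hρ, mul_add, add_mul, Polynomial.X_mul, ← Polynomial.algebraMap_apply,
    Algebra.commutes]


end
end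

section
/- For every integer j ≥ −1, the linear map x ↦ e(π)·x − x·e(π) maps g(j) := {x ∈ Mat_J(ℂ) : h(π)x − x h(π) = j·x} surjectively onto g(j+2). -/
open scoped BigOperators

noncomputable section

abbrev MatJ (m n ℓ : ℕ) := Matrix (Box m n ℓ) (Box m n ℓ) ℂ

/-- The matrix unit `E_{a,b}`. -/
def EU (m n ℓ : ℕ) (a b : Box m n ℓ) : MatJ m n ℓ := Matrix.single a b 1

/-- The rectangular nilpotent element `e(π)`. -/
def ePi (m n ℓ : ℕ) : MatJ m n ℓ :=
  ∑ a : Box m n ℓ, ∑ b : Box m n ℓ,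
    if a.1 = b.1 ∧ (b.2 : ℕ) = (a.2 : ℕ) + 1 then EU m n ℓ a b else 0

/-- The semisimple element `h(π)`, diagonal with entry `ℓ+1-2r` at a box in
(1-based) column `r`. -/
def hPi (m n ℓ : ℕ) : MatJ m n ℓ :=
  Matrix.diagonal fun a => (ℓ : ℂ) - 1 - 2 * ((a.2 : ℕ) : ℂ)

/-- `ad h(π)` as a `ℂ`-linear endomorphism of `Mat_J(ℂ)`. -/
def adH (m n ℓ : ℕ) : MatJ m n ℓ →ₗ[ℂ] MatJ m n ℓ :=
  LinearMap.mulLeft ℂ (hPi m n ℓ) - LinearMap.mulRight ℂ (hPi m n ℓ)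

/-- The eigenspace `g(j) = {x | h(π)x - x h(π) = j x}`. -/
def gsp (m n ℓ : ℕ) (j : ℤ) : Submodule ℂ (MatJ m n ℓ) :=
  LinearMap.ker (adH m n ℓ - (j : ℂ) • LinearMap.id)

variable {m n ℓ : ℕ}

lemma ePi_apply (a c : Box m n ℓ) :
    ePi m n ℓ a c = if a.1 = c.1 ∧ (c.2 : ℕ) = (a.2 : ℕ) + 1 then 1 else 0 := by
  classical
  simp only [ePi, Matrix.sum_apply]
  rw [Finset.sum_eq_single a]
  · rw [Finset.sum_eq_single c]
    · split_ifs with h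
      · simp [EU, Matrix.single]
      · simp
    · intro q _ hq
      split_ifs with h
      · simp only [EU, Matrix.single, Matrix.of_apply]
        rw [if_neg]; exact fun h' => hq h'.2
      · simp
    · simp
  · intro p _ hp
    apply Finset.sum_eq_zero
    intro q _
    split_ifs with h
    · simp only [EU, Matrix.single, Matrix.of_apply]
      rw [if_neg]; exact fun h' => hp h'.1
    · simp
  · simp

lemma mem_gsp_iff (x : MatJ m n ℓ) (j : ℤ) :
    x ∈ gsp m n ℓ j ↔ ∀ a b : Box m n ℓ,
      ((2 * ((b.2 : ℕ) : ℤ) - 2 * ((a.2 : ℕ) : ℤ) - j : ℤ) : ℂ) * x a b = 0 := by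
  rw [gsp, LinearMap.mem_ker]
  constructor
  · intro h a b
    have := congrFun (congrFun h a) b
    simp only [LinearMap.sub_apply, LinearMap.smul_apply, LinearMap.id_apply, adH,
      LinearMap.mulLeft_apply, LinearMap.mulRight_apply, Matrix.sub_apply, Matrix.smul_apply,
      Matrix.zero_apply, hPi, Matrix.diagonal_mul, Matrix.mul_diagonal, smul_eq_mul] at this
    push_cast
    linear_combination this
  · intro h
    funext a b
    have := h a b
    simp only [LinearMap.sub_apply, LinearMap.smul_apply, LinearMap.id_apply, adH,
      LinearMap.mulLeft_apply, LinearMap.mulRight_apply, Matrix.sub_apply, Matrix.smul_apply,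
      Matrix.zero_apply, hPi, Matrix.diagonal_mul, Matrix.mul_diagonal, smul_eq_mul]
    push_cast at this
    linear_combination this

lemma sum_fin_eq (N : ℕ) (f : Fin ℓ → ℂ) :
    (∑ s : Fin ℓ, if (s : ℕ) = N then f s else 0) = if h : N < ℓ then f ⟨N, h⟩ else 0 := by
  split_ifs with h
  · rw [Finset.sum_eq_single (⟨N, h⟩ : Fin ℓ)]
    · simp
    · intro s _ hs
      rw [if_neg]
      exact fun h' => hs (Fin.ext h')
    · simp
  · apply Finset.sum_eq_zero
    intro s _
    rw [if_neg]
    exact fun h' => h (h' ▸ s.2)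

lemma ePi_mul_apply (x : MatJ m n ℓ) (a b : Box m n ℓ) :
    (ePi m n ℓ * x) a b =
      if h : (a.2 : ℕ) + 1 < ℓ then x (a.1, ⟨(a.2 : ℕ) + 1, h⟩) b else 0 := by
  rw [Matrix.mul_apply]
  rw [Fintype.sum_prod_type]
  rw [Finset.sum_eq_single a.1]
  · have : ∀ s : Fin ℓ, ePi m n ℓ a (a.1, s) * x (a.1, s) b
        = if (s : ℕ) = (a.2 : ℕ) + 1 then x (a.1, s) b else 0 := by
      intro s
      rw [ePi_apply]
      split_ifs with h1 h2 h2 <;> simp_all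
    simp only [this]
    exact sum_fin_eq _ _
  · intro i _ hi
    apply Finset.sum_eq_zero
    intro s _
    rw [ePi_apply, if_neg (fun h => hi h.1.symm), zero_mul]
  · simp

lemma mul_ePi_apply (x : MatJ m n ℓ) (a b : Box m n ℓ) :
    (x * ePi m n ℓ) a b =
      if 0 < (b.2 : ℕ) then x a (b.1, ⟨(b.2 : ℕ) - 1, lt_of_le_of_lt (Nat.pred_le _) b.2.2⟩) else 0 := by
  rw [Matrix.mul_apply]
  rw [Fintype.sum_prod_type]
  rw [Finset.sum_eq_single b.1]
  · have : ∀ s : Fin ℓ, x a (b.1, s) * ePi m n ℓ (b.1, s) b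
        = if (s : ℕ) = (b.2 : ℕ) - 1 ∧ 0 < (b.2 : ℕ) then x a (b.1, s) else 0 := by
      intro s
      rw [ePi_apply]
      split_ifs with h1 h2 h2
      · exact mul_one _
      · have h1' : (b.2 : ℕ) = (s : ℕ) + 1 := h1.2
        exact absurd ⟨by omega, by omega⟩ h2
      · obtain ⟨h2a, h2b⟩ := h2
        refine absurd ⟨rfl, ?_⟩ h1
        show (b.2 : ℕ) = (s : ℕ) + 1
        omega
      · exact mul_zero _
    simp only [this]
    by_cases hb : 0 < (b.2 : ℕ)
    · simp only [hb, and_true, if_pos]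
      rw [sum_fin_eq ((b.2:ℕ)-1) (fun s => x a (b.1, s)), dif_pos]
    · simp [hb]
  · intro i _ hi
    apply Finset.sum_eq_zero
    intro s _
    rw [ePi_apply, if_neg (fun h => hi h.1), mul_zero]
  · simp

/-- Partial-sum preimage matrix. -/
def Xmat (m n ℓ D : ℕ) (y : MatJ m n ℓ) : MatJ m n ℓ :=
  fun a b => ∑ t : Fin ℓ, ∑ s : Fin ℓ,
    if (t : ℕ) < (a.2 : ℕ) ∧ (s : ℕ) = (t : ℕ) + D + 1 ∧ (b.2 : ℕ) = (a.2 : ℕ) + D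
    then y (a.1, t) (b.1, s) else 0

lemma Xmat_eq_zero (D : ℕ) (y : MatJ m n ℓ) (a b : Box m n ℓ)
    (hs : (b.2 : ℕ) ≠ (a.2 : ℕ) + D) : Xmat m n ℓ D y a b = 0 := by
  apply Finset.sum_eq_zero; intro t _
  apply Finset.sum_eq_zero; intro u _
  rw [if_neg]
  exact fun h => hs h.2.2

lemma entry_zero {c : ℤ} {v : ℂ} (h : (c : ℂ) * v = 0) (hc : c ≠ 0) : v = 0 :=
  (mul_eq_zero.1 h).resolve_left (by exact_mod_cast hc)

/-- for `j ≥ -1`, `ad e(π)` maps `g(j)` onto `g(j+2)`. -/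
theorem stmt13 (m n ℓ : ℕ) (hℓ : 0 < ℓ) (hmn : 0 < m + n) (j : ℤ) (hj : -1 ≤ j) :
    ∀ y ∈ gsp m n ℓ (j + 2), ∃ x ∈ gsp m n ℓ j,
      ePi m n ℓ * x - x * ePi m n ℓ = y := by
  intro y hy
  have hyab := (mem_gsp_iff y (j + 2)).1 hy
  rcases Int.even_or_odd j with ⟨d, hd⟩ | hodd
  · -- even case, j = 2d with d ≥ 0
    have hd0 : 0 ≤ d := by omega
    set D : ℕ := d.toNat with hDdef
    have hD : (D : ℤ) = d := Int.toNat_of_nonneg hd0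
    refine ⟨Xmat m n ℓ D y, ?_, ?_⟩
    · rw [mem_gsp_iff]
      intro a b
      by_cases hb : (b.2 : ℕ) = (a.2 : ℕ) + D
      · have hz : (2 * ((b.2 : ℕ) : ℤ) - 2 * ((a.2 : ℕ) : ℤ) - j : ℤ) = 0 := by omega
        rw [hz]; simp
      · rw [Xmat_eq_zero D y _ _ hb, mul_zero]
    · ext a b
      rw [Matrix.sub_apply, ePi_mul_apply, mul_ePi_apply]
      by_cases hb : (b.2 : ℕ) = (a.2 : ℕ) + D + 1
      · have hbl : (b.2 : ℕ) < ℓ := b.2.2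
        have ha1 : (a.2 : ℕ) + 1 < ℓ := by omega
        have hb1 : 0 < (b.2 : ℕ) := by omega
        have hlt : (a.2 : ℕ) + D + 1 < ℓ := by omega
        rw [dif_pos ha1, if_pos hb1]
        have key : ∀ t s : Fin ℓ,
            (if (t : ℕ) < (a.2 : ℕ) + 1 ∧ (s : ℕ) = (t : ℕ) + D + 1 ∧ (b.2 : ℕ) = ((a.2 : ℕ) + 1) + D
              then y (a.1, t) (b.1, s) else 0)
            - (if (t : ℕ) < (a.2 : ℕ) ∧ (s : ℕ) = (t : ℕ) + D + 1 ∧ ((b.2 : ℕ) - 1) = (a.2 : ℕ) + D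
              then y (a.1, t) (b.1, s) else 0)
            = if (t : ℕ) = (a.2 : ℕ) then
                (if (s : ℕ) = (a.2 : ℕ) + D + 1 then y (a.1, t) (b.1, s) else 0) else 0 := by
          intro t s
          split_ifs <;> first | ring1 | (exfalso; omega)
        have eA : Xmat m n ℓ D y (a.1, ⟨(a.2 : ℕ) + 1, ha1⟩) b
            = ∑ t : Fin ℓ, ∑ s : Fin ℓ,
              (if (t : ℕ) < (a.2 : ℕ) + 1 ∧ (s : ℕ) = (t : ℕ) + D + 1 ∧ (b.2 : ℕ) = ((a.2 : ℕ) + 1) + D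
                then y (a.1, t) (b.1, s) else 0) := rfl
        have eB : Xmat m n ℓ D y a (b.1, ⟨(b.2 : ℕ) - 1, lt_of_le_of_lt (Nat.pred_le _) b.2.2⟩)
            = ∑ t : Fin ℓ, ∑ s : Fin ℓ,
              (if (t : ℕ) < (a.2 : ℕ) ∧ (s : ℕ) = (t : ℕ) + D + 1 ∧ ((b.2 : ℕ) - 1) = (a.2 : ℕ) + D
                then y (a.1, t) (b.1, s) else 0) := rfl
        rw [eA, eB, ← Finset.sum_sub_distrib]
        calc (∑ t : Fin ℓ, ((∑ s : Fin ℓ,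
                (if (t : ℕ) < (a.2 : ℕ) + 1 ∧ (s : ℕ) = (t : ℕ) + D + 1 ∧ (b.2 : ℕ) = ((a.2 : ℕ) + 1) + D
                  then y (a.1, t) (b.1, s) else 0))
              - (∑ s : Fin ℓ,
                (if (t : ℕ) < (a.2 : ℕ) ∧ (s : ℕ) = (t : ℕ) + D + 1 ∧ ((b.2 : ℕ) - 1) = (a.2 : ℕ) + D
                  then y (a.1, t) (b.1, s) else 0))))
            = ∑ t : Fin ℓ, if (t : ℕ) = (a.2 : ℕ) then
                (∑ s : Fin ℓ, if (s : ℕ) = (a.2 : ℕ) + D + 1 then y (a.1, t) (b.1, s) else 0) else 0 := by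
              refine Finset.sum_congr rfl fun t _ => ?_
              rw [← Finset.sum_sub_distrib, Finset.sum_congr rfl fun s _ => key t s]
              split_ifs with h
              · rfl
              · exact Finset.sum_const_zero
          _ = y a b := by
              rw [sum_fin_eq, dif_pos a.2.2]
              simp only [Fin.eta]
              rw [sum_fin_eq, dif_pos hlt,
                show (⟨(a.2 : ℕ) + D + 1, hlt⟩ : Fin ℓ) = b.2 from Fin.ext (show (a.2 : ℕ) + D + 1 = (b.2 : ℕ) by omega)]
      · have hz : (2 * ((b.2 : ℕ) : ℤ) - 2 * ((a.2 : ℕ) : ℤ) - (j + 2) : ℤ) ≠ 0 := by omega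
        have hy0 : y a b = 0 := entry_zero (hyab a b) hz
        rw [hy0]
        have z1 : ∀ h : (a.2 : ℕ) + 1 < ℓ, Xmat m n ℓ D y (a.1, ⟨(a.2 : ℕ) + 1, h⟩) b = 0 :=
          fun h => Xmat_eq_zero D y _ _ (show (b.2 : ℕ) ≠ ((a.2 : ℕ) + 1) + D by omega)
        have z2 : 0 < (b.2 : ℕ) →
            Xmat m n ℓ D y a (b.1, ⟨(b.2 : ℕ) - 1, lt_of_le_of_lt (Nat.pred_le _) b.2.2⟩) = 0 :=
          fun hb0 => Xmat_eq_zero D y _ _ (show (b.2 : ℕ) - 1 ≠ (a.2 : ℕ) + D by omega)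
        split_ifs with h1 h2 h2
        · rw [z1 h1, z2 h2, sub_zero]
        · rw [z1 h1, sub_zero]
        · rw [z2 h2, zero_sub, neg_zero]
        · exact sub_zero 0
  · -- odd case: y = 0
    have hy0 : y = 0 := by
      funext a b
      obtain ⟨k, hk⟩ := hodd
      have hz : (2 * ((b.2 : ℕ) : ℤ) - 2 * ((a.2 : ℕ) : ℤ) - (j + 2) : ℤ) ≠ 0 := by omega
      exact entry_zero (hyab a b) hz
    refine ⟨0, Submodule.zero_mem _, ?_⟩
    rw [hy0]
    simp

end
end
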